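/- In the construction of A from P, the B_C-blocks are stationary and B_R-blocks shift right: for every configuration α : ℤ → Q̃ and every x ∈ ℤ, (α(x),α(x+1)) ∈ B_C if and only if (F̃(α)(x), F̃(α)(x+1)) ∈ B_C, and (α(x),α(x+1)) ∈ B_R if and only if (F̃(α)(x+1), F̃(α)(x+2)) ∈ B_R. -/
import Mathlib


open scoped Classical

noncomputable section

/-- Heavy-particle part of a state: `p_C(q) = 2·sR·(q / (2·sR))`. -/
def pC (sR q : ℕ) : ℕ := 2 * sR * (q / (2 * sR))

/-- Light-particle part of a state: `p_R(q) = q mod (2·sR)`. -/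
def pR (sR q : ℕ) : ℕ := q % (2 * sR)

/-- All heavy particles `C̃ = {2k·sR : 0 ≤ k ≤ 2sC−1}`. -/
def Ctil (sC sR : ℕ) : Set ℕ := {c | ∃ k < 2 * sC, c = 2 * k * sR}

/-- All light particles `R̃ = {0,…,2sR−1}`. -/
def Rtil (sR : ℕ) : Set ℕ := {r | r < 2 * sR}

/-- `Ĉ = {2k·sR : 0 ≤ k ≤ sC−1}`. -/
def Chat (sC sR : ℕ) : Set ℕ := {c | ∃ k < sC, c = 2 * k * sR}

/-- `Č = {2(k+sC)·sR : 0 ≤ k ≤ sC−1}`. -/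
def Ccheck (sC sR : ℕ) : Set ℕ := {c | ∃ k < sC, c = 2 * (k + sC) * sR}

/-- `R̂ = {0,…,sR−1}`. -/
def Rhat (sR : ℕ) : Set ℕ := {r | r < sR}

/-- `Ř = {sR,…,2sR−1}`. -/
def Rcheck (sR : ℕ) : Set ℕ := {r | sR ≤ r ∧ r < 2 * sR}

/-- Balanced pair of states w.r.t. heavy particles. -/
def BC (sC sR q1 q2 : ℕ) : Prop :=
  pC sR q1 ∈ Chat sC sR ∧ pC sR q2 ∈ Ccheck sC sR ∧
    pC sR q1 + pC sR q2 = 2 * (2 * sC - 1) * sR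

/-- Balanced pair of states w.r.t. light particles. -/
def BR (sR q1 q2 : ℕ) : Prop :=
  pR sR q1 ∈ Rhat sR ∧ pR sR q2 ∈ Rcheck sR ∧
    pR sR q1 + pR sR q2 = 2 * sR - 1

/-- `φ̂_C : C → Ĉ` built from an arbitrary bijection `φC` of `C = Fin sC`. -/
def phatC (sC sR : ℕ) (φC : Fin sC ≃ Fin sC) (c : Fin sC) : ℕ := 2 * (φC c : ℕ) * sR

/-- `φ̂_R : R → R̂` built from an arbitrary bijection `φR` of `R = Fin sR`. -/
def phatR (sR : ℕ) (φR : Fin sR ≃ Fin sR) (r : Fin sR) : ℕ := (φR r : ℕ)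

/-- `φ̌_C(c) = 2(2sC−1)sR − φ̂_C(c)`. -/
def pcheckC (sC sR : ℕ) (φC : Fin sC ≃ Fin sC) (c : Fin sC) : ℕ :=
  2 * (2 * sC - 1) * sR - phatC sC sR φC c

/-- `φ̌_R(r) = 2sR−1 − φ̂_R(r)`. -/
def pcheckR (sR : ℕ) (φR : Fin sR ≃ Fin sR) (r : Fin sR) : ℕ :=
  2 * sR - 1 - phatR sR φR r

/-- `φ̂(c,r) = φ̂_C(c) + φ̂_R(r)`. -/
def phat (sC sR : ℕ) (φC : Fin sC ≃ Fin sC) (φR : Fin sR ≃ Fin sR)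
    (q : Fin sC × Fin sR) : ℕ := phatC sC sR φC q.1 + phatR sR φR q.2

/-- `φ̌(c,r) = φ̌_C(c) + φ̌_R(r)`. -/
def pcheck (sC sR : ℕ) (φC : Fin sC ≃ Fin sC) (φR : Fin sR ≃ Fin sR)
    (q : Fin sC × Fin sR) : ℕ := pcheckC sC sR φC q.1 + pcheckR sR φR q.2

/-- `Q̂ = {ĉ + r̂ : ĉ ∈ Ĉ, r̂ ∈ R̂}`. -/
def Qhat (sC sR : ℕ) : Set ℕ := {q | ∃ c ∈ Chat sC sR, ∃ r ∈ Rhat sR, q = c + r}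

/-- `Q̌ = {č + ř : č ∈ Č, ř ∈ Ř}`. -/
def Qcheck (sC sR : ℕ) : Set ℕ := {q | ∃ c ∈ Ccheck sC sR, ∃ r ∈ Rcheck sR, q = c + r}

/-- `φ̂_C⁻¹` applied to a heavy particle (given as a natural number). -/
def decC (sC sR : ℕ) [NeZero sC] (φC : Fin sC ≃ Fin sC) (c : ℕ) : Fin sC :=
  φC.symm ⟨(c / (2 * sR)) % sC, Nat.mod_lt _ (Nat.pos_of_ne_zero (NeZero.ne sC))⟩

/-- `φ̂_R⁻¹` applied to a light particle (given as a natural number). -/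
def decR (sR : ℕ) [NeZero sR] (φR : Fin sR ≃ Fin sR) (r : ℕ) : Fin sR :=
  φR.symm ⟨r % sR, Nat.mod_lt _ (Nat.pos_of_ne_zero (NeZero.ne sR))⟩

/-- The three-case local function `f̃` of the 4-neighbor RNCCA `A`. -/
def ftil (sC sR : ℕ) [NeZero sC] [NeZero sR] (φC : Fin sC ≃ Fin sC) (φR : Fin sR ≃ Fin sR)
    (f : Fin sC × Fin sR → Fin sC × Fin sR) (qm2 qm1 q0 q1 : ℕ) : ℕ :=
  if BR sR qm1 q0 ∧ BC sC sR q0 q1 then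
    phat sC sR φC φR (f (decC sC sR φC (pC sR q0), decR sR φR (pR sR qm1)))
  else if BR sR qm2 qm1 ∧ BC sC sR qm1 q0 then
    pcheck sC sR φC φR (f (decC sC sR φC (pC sR qm1), decR sR φR (pR sR qm2)))
  else pC sR q0 + pR sR qm1

/-- Global function `F̃` of `A` with neighborhood `(−2,−1,0,1)`. -/
def Ftil (sC sR : ℕ) [NeZero sC] [NeZero sR] (φC : Fin sC ≃ Fin sC) (φR : Fin sR ≃ Fin sR)
    (f : Fin sC × Fin sR → Fin sC × Fin sR) (α : ℤ → ℕ) (x : ℤ) : ℕ :=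
  ftil sC sR φC φR f (α (x - 2)) (α (x - 1)) (α x) (α (x + 1))

/-- The encoding `τ̃`: `τ̃(α)(2x) = φ̂(α(x))`, `τ̃(α)(2x+1) = φ̌(α(x))`. -/
def tenc (sC sR : ℕ) (φC : Fin sC ≃ Fin sC) (φR : Fin sR ≃ Fin sR)
    (α : ℤ → Fin sC × Fin sR) (y : ℤ) : ℕ :=
  if Even y then phat sC sR φC φR (α (y / 2)) else pcheck sC sR φC φR (α ((y - 1) / 2))

/-- Global function of the 2-neighbor PCA `P` with neighborhood `(0,−1)`. -/
def FP {C R : Type*} (f : C × R → C × R) (α : ℤ → C × R) (x : ℤ) : C × R :=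
  f ((α x).1, (α (x - 1)).2)

end

noncomputable section Aux

variable {sC sR : ℕ}

lemma pC_mul_add (hsR : 0 < sR) (k r : ℕ) (hr : r < 2 * sR) :
    pC sR (2 * sR * k + r) = 2 * sR * k := by
  unfold pC
  rw [Nat.mul_add_div (by omega), Nat.div_eq_of_lt hr, Nat.add_zero]

lemma pR_mul_add (k r : ℕ) (hr : r < 2 * sR) :
    pR sR (2 * sR * k + r) = r := by
  unfold pR
  rw [Nat.mul_add_mod, Nat.mod_eq_of_lt hr]

lemma pC_phat (φC : Fin sC ≃ Fin sC) (φR : Fin sR ≃ Fin sR) (q : Fin sC × Fin sR) :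
    pC sR (phat sC sR φC φR q) = phatC sC sR φC q.1 := by
  have hsR : 0 < sR := (φR q.2).pos
  have hb : ((φR q.2 : Fin sR) : ℕ) < sR := (φR q.2).isLt
  unfold phat phatC phatR
  rw [show 2 * ((φC q.1 : Fin sC) : ℕ) * sR = 2 * sR * ((φC q.1 : Fin sC) : ℕ) by ring,
    pC_mul_add hsR _ _ (by omega)]

lemma pR_phat (φC : Fin sC ≃ Fin sC) (φR : Fin sR ≃ Fin sR) (q : Fin sC × Fin sR) :
    pR sR (phat sC sR φC φR q) = phatR sR φR q.2 := by
  have hb : ((φR q.2 : Fin sR) : ℕ) < sR := (φR q.2).isLt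
  unfold phat phatC phatR
  rw [show 2 * ((φC q.1 : Fin sC) : ℕ) * sR = 2 * sR * ((φC q.1 : Fin sC) : ℕ) by ring,
    pR_mul_add _ _ (by omega)]

lemma pcheckC_eq (φC : Fin sC ≃ Fin sC) (c : Fin sC) :
    pcheckC sC sR φC c = 2 * sR * (2 * sC - 1 - ((φC c : Fin sC) : ℕ)) := by
  have ha : ((φC c : Fin sC) : ℕ) < sC := (φC c).isLt
  unfold pcheckC phatC
  rw [← Nat.sub_mul,
    show 2 * (2 * sC - 1) - 2 * ((φC c : Fin sC) : ℕ)
      = 2 * (2 * sC - 1 - ((φC c : Fin sC) : ℕ)) by omega]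
  ring

lemma pC_pcheck (φC : Fin sC ≃ Fin sC) (φR : Fin sR ≃ Fin sR) (q : Fin sC × Fin sR) :
    pC sR (pcheck sC sR φC φR q) = pcheckC sC sR φC q.1 := by
  have hsR : 0 < sR := (φR q.2).pos
  have hb : ((φR q.2 : Fin sR) : ℕ) < sR := (φR q.2).isLt
  unfold pcheck pcheckR phatR
  rw [pcheckC_eq, pC_mul_add hsR _ _ (by omega), ← pcheckC_eq]

lemma pR_pcheck (φC : Fin sC ≃ Fin sC) (φR : Fin sR ≃ Fin sR) (q : Fin sC × Fin sR) :
    pR sR (pcheck sC sR φC φR q) = pcheckR sR φR q.2 := by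
  have hsR : 0 < sR := (φR q.2).pos
  have hb : ((φR q.2 : Fin sR) : ℕ) < sR := (φR q.2).isLt
  unfold pcheck pcheckR phatR
  rw [pcheckC_eq, pR_mul_add _ _ (by omega)]

lemma phatC_mem (φC : Fin sC ≃ Fin sC) (c : Fin sC) :
    phatC sC sR φC c ∈ Chat sC sR :=
  ⟨(φC c : Fin sC), (φC c).isLt, rfl⟩

lemma pcheckC_mem (φC : Fin sC ≃ Fin sC) (c : Fin sC) :
    pcheckC sC sR φC c ∈ Ccheck sC sR := by
  have ha : ((φC c : Fin sC) : ℕ) < sC := (φC c).isLt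
  have hsC : 0 < sC := c.pos
  refine ⟨sC - 1 - ((φC c : Fin sC) : ℕ), by omega, ?_⟩
  rw [pcheckC_eq,
    show sC - 1 - ((φC c : Fin sC) : ℕ) + sC = 2 * sC - 1 - ((φC c : Fin sC) : ℕ) by omega]
  ring

lemma phatR_mem (φR : Fin sR ≃ Fin sR) (r : Fin sR) :
    phatR sR φR r ∈ Rhat sR := (φR r).isLt

lemma pcheckR_mem (φR : Fin sR ≃ Fin sR) (r : Fin sR) :
    pcheckR sR φR r ∈ Rcheck sR := by
  have hb : ((φR r : Fin sR) : ℕ) < sR := (φR r).isLt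
  have hsR : 0 < sR := r.pos
  unfold pcheckR phatR
  exact ⟨by omega, by omega⟩

lemma phatC_add_pcheckC (φC : Fin sC ≃ Fin sC) (c : Fin sC) :
    phatC sC sR φC c + pcheckC sC sR φC c = 2 * (2 * sC - 1) * sR := by
  have ha : ((φC c : Fin sC) : ℕ) < sC := (φC c).isLt
  have hle : phatC sC sR φC c ≤ 2 * (2 * sC - 1) * sR := by
    unfold phatC
    exact Nat.mul_le_mul_right sR (by omega)
  unfold pcheckC
  omega

lemma phatR_add_pcheckR (φR : Fin sR ≃ Fin sR) (r : Fin sR) :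
    phatR sR φR r + pcheckR sR φR r = 2 * sR - 1 := by
  have hb : ((φR r : Fin sR) : ℕ) < sR := (φR r).isLt
  unfold pcheckR phatR
  omega

lemma BC_phat_pcheck (φC : Fin sC ≃ Fin sC) (φR : Fin sR ≃ Fin sR) (q : Fin sC × Fin sR) :
    BC sC sR (phat sC sR φC φR q) (pcheck sC sR φC φR q) := by
  refine ⟨?_, ?_, ?_⟩
  · rw [pC_phat]; exact phatC_mem φC q.1
  · rw [pC_pcheck]; exact pcheckC_mem φC q.1
  · rw [pC_phat, pC_pcheck]; exact phatC_add_pcheckC φC q.1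

lemma BR_phat_pcheck (φC : Fin sC ≃ Fin sC) (φR : Fin sR ≃ Fin sR) (q : Fin sC × Fin sR) :
    BR sR (phat sC sR φC φR q) (pcheck sC sR φC φR q) := by
  refine ⟨?_, ?_, ?_⟩
  · rw [pR_phat]; exact phatR_mem φR q.2
  · rw [pR_pcheck]; exact pcheckR_mem φR q.2
  · rw [pR_phat, pR_pcheck]; exact phatR_add_pcheckR φR q.2

lemma chat_disj (hsR : 0 < sR) {a : ℕ} (h1 : a ∈ Chat sC sR) (h2 : a ∈ Ccheck sC sR) :
    False := by
  obtain ⟨k, hk, rfl⟩ := h1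
  obtain ⟨k', hk', he⟩ := h2
  have h3 : 2 * k = 2 * (k' + sC) := Nat.eq_of_mul_eq_mul_right hsR he
  omega

lemma rhat_disj {a : ℕ} (h1 : a ∈ Rhat sR) (h2 : a ∈ Rcheck sR) : False := by
  exact absurd h1 (by simpa [Rhat] using h2.1.not_gt)

lemma BC_chain (hsR : 0 < sR) {q1 q2 q3 : ℕ} (h1 : BC sC sR q1 q2) (h2 : BC sC sR q2 q3) :
    False := chat_disj hsR h2.1 h1.2.1

lemma BR_chain {q1 q2 q3 : ℕ} (h1 : BR sR q1 q2) (h2 : BR sR q2 q3) : False :=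
  rhat_disj h2.1 h1.2.1

lemma BC_congr {q1 q2 q1' q2' : ℕ} (h1 : pC sR q1 = pC sR q1') (h2 : pC sR q2 = pC sR q2') :
    BC sC sR q1 q2 ↔ BC sC sR q1' q2' := by
  unfold BC; rw [h1, h2]

lemma BR_congr {q1 q2 q1' q2' : ℕ} (h1 : pR sR q1 = pR sR q1') (h2 : pR sR q2 = pR sR q2') :
    BR sR q1 q2 ↔ BR sR q1' q2' := by
  unfold BR; rw [h1, h2]

lemma pC_pC_add_pR (hsR : 0 < sR) (q q' : ℕ) :
    pC sR (pC sR q + pR sR q') = pC sR q :=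
  pC_mul_add hsR (q / (2 * sR)) (pR sR q') (Nat.mod_lt _ (by omega))

lemma pR_pC_add_pR (hsR : 0 < sR) (q q' : ℕ) :
    pR sR (pC sR q + pR sR q') = pR sR q' :=
  pR_mul_add (q / (2 * sR)) (pR sR q') (Nat.mod_lt _ (by omega))

/-- The case-A condition of `f̃` at cell `y`. -/
def Pcond (sC sR : ℕ) (α : ℤ → ℕ) (y : ℤ) : Prop :=
  BR sR (α (y - 1)) (α y) ∧ BC sC sR (α y) (α (y + 1))

/-- The argument fed to `f` at cell `y`. -/
def gval (sC sR : ℕ) [NeZero sC] [NeZero sR] (φC : Fin sC ≃ Fin sC)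
    (φR : Fin sR ≃ Fin sR) (f : Fin sC × Fin sR → Fin sC × Fin sR)
    (α : ℤ → ℕ) (y : ℤ) : Fin sC × Fin sR :=
  f (decC sC sR φC (pC sR (α y)), decR sR φR (pR sR (α (y - 1))))

lemma Ftil_eq [NeZero sC] [NeZero sR] (φC : Fin sC ≃ Fin sC) (φR : Fin sR ≃ Fin sR)
    (f : Fin sC × Fin sR → Fin sC × Fin sR) (α : ℤ → ℕ) (y : ℤ) :
    Ftil sC sR φC φR f α y =
      if Pcond sC sR α y then phat sC sR φC φR (gval sC sR φC φR f α y)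
      else if Pcond sC sR α (y - 1) then pcheck sC sR φC φR (gval sC sR φC φR f α (y - 1))
      else pC sR (α y) + pR sR (α (y - 1)) := by
  unfold Ftil ftil Pcond gval
  rw [show y - 1 - 1 = y - 2 by ring, show y - 1 + 1 = y by ring]
  split_ifs <;> rfl

end Aux

theorem stmt7 (sC sR : ℕ) [NeZero sC] [NeZero sR] (φC : Fin sC ≃ Fin sC)
    (φR : Fin sR ≃ Fin sR) (f : Fin sC × Fin sR → Fin sC × Fin sR)
    (hf : Function.Injective f) (α : ℤ → ℕ)
    (hα : ∀ x : ℤ, α x < 4 * sC * sR) (x : ℤ) :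
    (BC sC sR (α x) (α (x + 1)) ↔
      BC sC sR (Ftil sC sR φC φR f α x) (Ftil sC sR φC φR f α (x + 1))) ∧
    (BR sR (α x) (α (x + 1)) ↔
      BR sR (Ftil sC sR φC φR f α (x + 1)) (Ftil sC sR φC φR f α (x + 2))) := by
  have hsR : 0 < sR := Nat.pos_of_ne_zero (NeZero.ne sR)
  have hF := Ftil_eq φC φR f α
  have hPP : ∀ y : ℤ, Pcond sC sR α y → ¬ Pcond sC sR α (y + 1) := fun y hy hy1 =>
    BC_chain hsR hy.2 hy1.2
  constructor
  · rw [hF x, hF (x + 1), show (x : ℤ) + 1 - 1 = x by ring]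
    by_cases h1 : Pcond sC sR α x
    · have h2 : ¬ Pcond sC sR α (x + 1) := hPP x h1
      rw [if_pos h1, if_neg h2, if_pos h1]
      exact iff_of_true h1.2 (BC_phat_pcheck φC φR _)
    · rw [if_neg h1]
      by_cases h0 : Pcond sC sR α (x - 1)
      · rw [if_pos h0]
        have hBCx : BC sC sR (α (x - 1)) (α x) := by
          have := h0.2; rwa [show x - 1 + 1 = x by ring] at this
        refine iff_of_false (fun h => BC_chain hsR hBCx h) (fun h => ?_)
        have hm := pcheckC_mem (sR := sR) φC (gval sC sR φC φR f α (x - 1)).1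
        rw [← pC_pcheck φC φR] at hm
        exact chat_disj hsR h.1 hm
      · rw [if_neg h0]
        by_cases h2 : Pcond sC sR α (x + 1)
        · rw [if_pos h2]
          refine iff_of_false (fun h => BC_chain hsR h h2.2) (fun h => ?_)
          have hm := phatC_mem (sR := sR) φC (gval sC sR φC φR f α (x + 1)).1
          rw [← pC_phat φC φR] at hm
          exact chat_disj hsR hm h.2.1
        · rw [if_neg h2, if_neg h1]
          exact BC_congr (pC_pC_add_pR hsR _ _).symm (pC_pC_add_pR hsR _ _).symm
  · rw [hF (x + 1), hF (x + 2), show (x : ℤ) + 1 - 1 = x by ring,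
      show (x : ℤ) + 2 - 1 = x + 1 by ring]
    by_cases h2 : Pcond sC sR α (x + 1)
    · have h3 : ¬ Pcond sC sR α (x + 2) := by
        have := hPP (x + 1) h2; rwa [show x + 1 + 1 = x + 2 by ring] at this
      have h21 : BR sR (α x) (α (x + 1)) := by
        have := h2.1; rwa [show x + 1 - 1 = x by ring] at this
      rw [if_pos h2, if_neg h3, if_pos h2]
      exact iff_of_true h21 (BR_phat_pcheck φC φR _)
    · rw [if_neg h2]
      by_cases h1 : Pcond sC sR α x
      · rw [if_pos h1]
        refine iff_of_false (fun h => BR_chain h1.1 h) (fun h => ?_)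
        have hm := pcheckR_mem (sR := sR) φR (gval sC sR φC φR f α x).2
        rw [← pR_pcheck φC φR] at hm
        exact rhat_disj h.1 hm
      · rw [if_neg h1]
        by_cases h3 : Pcond sC sR α (x + 2)
        · rw [if_pos h3]
          have h31 : BR sR (α (x + 1)) (α (x + 2)) := by
            have := h3.1; rwa [show x + 2 - 1 = x + 1 by ring] at this
          refine iff_of_false (fun h => BR_chain h h31) (fun h => ?_)
          have hm := phatR_mem (sR := sR) φR (gval sC sR φC φR f α (x + 2)).2
          rw [← pR_phat φC φR] at hm
          exact rhat_disj hm h.2.1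
        · rw [if_neg h3, if_neg h2]
          exact BR_congr (pR_pC_add_pR hsR _ _).symm (pR_pC_add_pR hsR _ _).symm
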